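/- Distribution of the difference statistic: let X, X̃ ∈ ℝ^{n×p} satisfy X̃ᵀX̃ = XᵀX = Σ and XᵀX̃ = Σ − diag{s} for a vector s ∈ ℝ^p, and let y = Xβ + z with β ∈ ℝ^p fixed and z ~ N(0, σ²Iₙ). Then the statistic W = Xᵀy − X̃ᵀy is distributed as N(diag{s}·β, 2σ²·diag{s}); in particular its p coordinates are independent Gaussians with W_j ~ N(s_j·β_j, 2σ²·s_j). -/

import Mathlib

set_option maxHeartbeats 1000000

open Matrix MeasureTheory ProbabilityTheory
open Real Set Finset
open scoped ENNReal NNReal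

lemma my_measurable_mulVec {m k : Type*} [Fintype k] (M : Matrix m k ℝ) :
    Measurable (fun x : k → ℝ => M.mulVec x) := by
  apply measurable_pi_lambda
  intro i
  simp only [Matrix.mulVec, dotProduct]
  exact Finset.measurable_sum _ fun j _ => ((measurable_pi_apply j).const_mul _)

open Finset in
lemma my_lintegral_pi_prod {δ : Type*} [Fintype δ] [DecidableEq δ]
    (μ : δ → Measure ℝ) [∀ i, SigmaFinite (μ i)]
    (g : δ → ℝ → ℝ≥0∞) (hg : ∀ i, Measurable (g i)) :
    ∫⁻ x, ∏ i, g i (x i) ∂Measure.pi μ = ∏ i, ∫⁻ t, g i t ∂μ i := by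
  have hf : Measurable fun x : δ → ℝ => ∏ i, g i (x i) :=
    Finset.measurable_prod _ fun i _ => (hg i).comp (measurable_pi_apply i)
  have main : ∀ s : Finset δ, ∀ z : δ → ℝ,
      (∫⋯∫⁻_s, (fun x => ∏ i, g i (x i)) ∂μ) z
        = (∏ i ∈ s, ∫⁻ t, g i t ∂μ i) * ∏ i ∈ sᶜ, g i (z i) := by
    intro s
    induction s using Finset.induction with
    | empty => intro z; simp [MeasureTheory.lmarginal_empty]
    | @insert i s hi ih =>
      intro z
      rw [MeasureTheory.lmarginal_insert _ hf hi]
      have hstep : ∀ xi : ℝ, (∫⋯∫⁻_s, (fun x => ∏ i, g i (x i)) ∂μ) (Function.update z i xi)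
          = ((∏ j ∈ s, ∫⁻ t, g j t ∂μ j) * ∏ j ∈ (insert i s)ᶜ, g j (z j)) * g i xi := by
        intro xi
        rw [ih]
        have hmem : i ∈ sᶜ := Finset.mem_compl.mpr hi
        rw [← Finset.mul_prod_erase sᶜ _ hmem, Function.update_self]
        have : ∏ j ∈ sᶜ.erase i, g j (Function.update z i xi j)
            = ∏ j ∈ (insert i s)ᶜ, g j (z j) := by
          rw [Finset.compl_insert]
          exact Finset.prod_congr rfl fun j hj => by
            rw [Function.update_of_ne (Finset.ne_of_mem_erase hj)]
        rw [this]; ring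
      simp_rw [hstep]
      rw [lintegral_const_mul _ (hg i), Finset.prod_insert hi]
      ring
  have hz : ∃ z : δ → ℝ, True := ⟨fun _ => 0, trivial⟩
  obtain ⟨z, -⟩ := hz
  rw [MeasureTheory.lintegral_eq_lmarginal_univ z, main Finset.univ z]
  simp

lemma my_pi_gaussian_eq_withDensity {δ : Type*} [Fintype δ] [DecidableEq δ]
    (v : ℝ≥0) (hv : v ≠ 0) :
    (Measure.pi fun _ : δ => gaussianReal 0 v)
      = (volume : Measure (δ → ℝ)).withDensity
          (fun x => ∏ i, gaussianPDF 0 v (x i)) := by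
  apply Measure.pi_eq
  intro t ht
  rw [withDensity_apply _ (MeasurableSet.univ_pi ht)]
  calc ∫⁻ x in univ.pi t, ∏ i, gaussianPDF 0 v (x i) ∂volume
      = ∫⁻ x, ∏ i, (t i).indicator (gaussianPDF 0 v) (x i)
          ∂(volume : Measure (δ → ℝ)) := by
        rw [← lintegral_indicator (MeasurableSet.univ_pi ht) _]
        congr 1; funext x
        by_cases hx : x ∈ univ.pi t
        · rw [Set.indicator_of_mem hx]
          exact Finset.prod_congr rfl fun i _ =>
            (Set.indicator_of_mem (hx i (Set.mem_univ i)) _).symm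
        · rw [Set.indicator_of_notMem hx]
          rw [Set.mem_univ_pi] at hx
          push_neg at hx
          obtain ⟨i, hxi⟩ := hx
          exact (Finset.prod_eq_zero (Finset.mem_univ i)
            (by rw [Set.indicator_of_notMem hxi])).symm
    _ = ∏ i, ∫⁻ r, (t i).indicator (gaussianPDF 0 v) r ∂(volume : Measure ℝ) := by
        rw [MeasureTheory.volume_pi]
        exact my_lintegral_pi_prod _ _
          (fun i => (measurable_gaussianPDF 0 v).indicator (ht i))
    _ = ∏ i, gaussianReal 0 v (t i) := by
        refine Finset.prod_congr rfl fun i _ => ?_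
        rw [lintegral_indicator (ht i) _, ← gaussianReal_apply 0 hv]

lemma my_map_withDensity_equiv {α β : Type*} [MeasurableSpace α] [MeasurableSpace β]
    (e : α ≃ᵐ β) (μ : Measure α) {g : β → ℝ≥0∞} (hg : Measurable g) :
    Measure.map e (μ.withDensity (fun x => g (e x))) = (Measure.map e μ).withDensity g := by
  ext s hs
  rw [Measure.map_apply e.measurable hs, withDensity_apply _ hs,
    withDensity_apply _ (e.measurable hs), setLIntegral_map hs hg e.measurable]

lemma my_rotation_invariant {δ : Type*} [Fintype δ] [DecidableEq δ]
    (v : ℝ≥0) (hv : v ≠ 0) (Q : Matrix δ δ ℝ) (hQ : Q * Qᵀ = 1) :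
    Measure.map Q.mulVec (Measure.pi fun _ : δ => gaussianReal 0 v)
      = Measure.pi fun _ : δ => gaussianReal 0 v := by
  have hQ' : Qᵀ * Q = 1 := mul_eq_one_comm.mp hQ
  -- the measurable equivalence given by `Q`
  let e : (δ → ℝ) ≃ᵐ (δ → ℝ) :=
    { toFun := Q.mulVec
      invFun := Qᵀ.mulVec
      left_inv := fun x => by
        simp [Matrix.mulVec_mulVec, hQ', Matrix.one_mulVec]
      right_inv := fun x => by
        simp [Matrix.mulVec_mulVec, hQ, Matrix.one_mulVec]
      measurable_toFun := my_measurable_mulVec Q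
      measurable_invFun := my_measurable_mulVec Qᵀ }
  have hcoe : ⇑e = Q.mulVec := rfl
  -- determinant facts
  have hdet2 : Q.det * Q.det = 1 := by
    have h := congrArg Matrix.det hQ
    rwa [Matrix.det_mul, Matrix.det_transpose, Matrix.det_one] at h
  have hdet0 : Q.det ≠ 0 := by
    intro h; rw [h, mul_zero] at hdet2; exact zero_ne_one hdet2
  have habs : |Q.det| = 1 := by nlinarith [abs_nonneg Q.det, abs_mul_abs_self Q.det]
  -- invariance of the density
  have hsum : ∀ x : δ → ℝ, ∑ i, (Q.mulVec x i)^2 = ∑ i, (x i)^2 := by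
    intro x
    have h1 : Q.mulVec x ⬝ᵥ Q.mulVec x = x ⬝ᵥ x := by
      rw [Matrix.dotProduct_mulVec, ← Matrix.mulVec_transpose, Matrix.mulVec_mulVec,
        hQ', Matrix.one_mulVec]
    simpa [dotProduct, pow_two] using h1
  have prodform : ∀ y : δ → ℝ, (∏ i, gaussianPDF 0 v (y i))
      = ENNReal.ofReal ((√(2 * π * (v:ℝ)))⁻¹ ^ (Fintype.card δ)
          * rexp ((-∑ i, (y i)^2) / (2 * (v:ℝ)))) := by
    intro y
    rw [show (∏ i, gaussianPDF 0 v (y i))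
        = ENNReal.ofReal (∏ i, gaussianPDFReal 0 v (y i)) from
      (ENNReal.ofReal_prod_of_nonneg (fun i _ => gaussianPDFReal_nonneg 0 v (y i))).symm]
    congr 1
    simp only [gaussianPDFReal, sub_zero]
    rw [Finset.prod_mul_distrib, Finset.prod_const, Finset.card_univ, ← Real.exp_sum]
    congr 1
    rw [← Finset.sum_div, ← Finset.sum_neg_distrib]
  have hdens : ∀ x : δ → ℝ,
      (∏ i, gaussianPDF 0 v (Q.mulVec x i)) = ∏ i, gaussianPDF 0 v (x i) := by
    intro x
    rw [prodform, prodform, hsum]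
  set ρ : (δ → ℝ) → ℝ≥0∞ := fun x => ∏ i, gaussianPDF 0 v (x i) with hρ
  have hρmeas : Measurable ρ :=
    Finset.measurable_prod _ fun i _ =>
      (measurable_gaussianPDF 0 v).comp (measurable_pi_apply i)
  have hvol : Measure.map (⇑e) (volume : Measure (δ → ℝ)) = volume := by
    have h1 : ⇑e = ⇑(Matrix.toLin' Q) := by
      funext x; rw [hcoe, Matrix.toLin'_apply]
    rw [h1, Real.map_matrix_volume_pi_eq_smul_volume_pi hdet0, abs_inv, habs]
    simp
  calc Measure.map Q.mulVec (Measure.pi fun _ : δ => gaussianReal 0 v)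
      = Measure.map (⇑e) (volume.withDensity fun x => ρ (e x)) := by
        rw [my_pi_gaussian_eq_withDensity v hv, hcoe]
        exact congrArg _ (congrArg _ (funext fun x => (hdens x).symm))
    _ = (Measure.map (⇑e) volume).withDensity ρ := my_map_withDensity_equiv e volume hρmeas
    _ = volume.withDensity ρ := by rw [hvol]
    _ = Measure.pi fun _ : δ => gaussianReal 0 v :=
        (my_pi_gaussian_eq_withDensity v hv).symm

lemma my_map_comp_inl {α β : Type*} [Fintype α] [Fintype β]
    (κ : Measure ℝ) [IsProbabilityMeasure κ] :
    Measure.map (fun y : α ⊕ β → ℝ => fun a => y (Sum.inl a))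
        (Measure.pi fun _ : α ⊕ β => κ)
      = Measure.pi fun _ : α => κ := by
  have h := (measurePreserving_sumPiEquivProdPi
    (fun _ : α ⊕ β => κ)).map_eq
  have hfun : (fun y : α ⊕ β → ℝ => fun a => y (Sum.inl a))
      = Prod.fst ∘ ⇑(MeasurableEquiv.sumPiEquivProdPi (fun _ : α ⊕ β => ℝ)) := rfl
  rw [hfun, ← Measure.map_map measurable_fst
    (MeasurableEquiv.sumPiEquivProdPi (fun _ : α ⊕ β => ℝ)).measurable, h,
    Measure.map_fst_prod]
  simp

lemma my_map_comp_inr {α β : Type*} [Fintype α] [Fintype β]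
    (κ : Measure ℝ) [IsProbabilityMeasure κ] :
    Measure.map (fun y : α ⊕ β → ℝ => fun b => y (Sum.inr b))
        (Measure.pi fun _ : α ⊕ β => κ)
      = Measure.pi fun _ : β => κ := by
  have h := (measurePreserving_sumPiEquivProdPi
    (fun _ : α ⊕ β => κ)).map_eq
  have hfun : (fun y : α ⊕ β → ℝ => fun b => y (Sum.inr b))
      = Prod.snd ∘ ⇑(MeasurableEquiv.sumPiEquivProdPi (fun _ : α ⊕ β => ℝ)) := rfl
  rw [hfun, ← Measure.map_map measurable_snd
    (MeasurableEquiv.sumPiEquivProdPi (fun _ : α ⊕ β => ℝ)).measurable, h,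
    Measure.map_snd_prod]
  simp

lemma my_map_pi_comp {δ : Type*} [Fintype δ] (μ : δ → Measure ℝ)
    [∀ i, IsProbabilityMeasure (μ i)] (f : δ → ℝ → ℝ) (hf : ∀ i, Measurable (f i)) :
    Measure.map (fun x i => f i (x i)) (Measure.pi μ)
      = Measure.pi fun i => Measure.map (f i) (μ i) := by
  haveI : ∀ i, IsProbabilityMeasure ((μ i).map (f i)) :=
    fun i => Measure.isProbabilityMeasure_map (hf i).aemeasurable
  have hF : Measurable (fun x : δ → ℝ => fun i => f i (x i)) :=
    measurable_pi_lambda _ fun i => (hf i).comp (measurable_pi_apply i)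
  refine (Measure.pi_eq fun t ht => ?_).symm
  rw [Measure.map_apply hF (MeasurableSet.univ_pi ht)]
  have hpre : (fun x : δ → ℝ => fun i => f i (x i)) ⁻¹' (univ.pi t)
      = univ.pi fun i => f i ⁻¹' t i := by
    ext x; simp [Set.mem_pi]
  rw [hpre, Measure.pi_pi]
  exact Finset.prod_congr rfl fun i _ =>
    (Measure.map_apply (hf i) (ht i)).symm

lemma my_map_affine_gaussian (v : ℝ≥0) (a c : ℝ) :
    Measure.map (fun r => c + a * r) (gaussianReal 0 v)
      = gaussianReal c (⟨a ^ 2, sq_nonneg a⟩ * v) := by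
  have h1 : (fun r : ℝ => c + a * r) = (fun r : ℝ => r + c) ∘ (fun r : ℝ => a * r) := by
    funext r; simp [add_comm]
  rw [h1, ← Measure.map_map (by fun_prop) (by fun_prop),
    gaussianReal_map_const_mul, gaussianReal_map_add_const, mul_zero, zero_add]
  rfl

lemma my_complete_rows {p : ℕ} {ι : Type*} [Fintype ι] [DecidableEq ι]
    (C : Matrix (Fin p) ι ℝ) (d : Fin p → ℝ) (inj : Fin p → ι)
    (hinj : Function.Injective inj)
    (hC : ∀ j k, C j ⬝ᵥ C k = if j = k then d j else 0) :
    ∃ Q : Matrix ι ι ℝ, Q * Qᵀ = 1 ∧ ∀ j i, C j i = Real.sqrt (d j) * Q (inj j) i := by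
  classical
  have hd0 : ∀ j, 0 ≤ d j := by
    intro j
    have h := hC j j
    rw [if_pos rfl] at h
    rw [← h]
    exact Finset.sum_nonneg fun k _ => mul_self_nonneg _
  -- normalized rows
  set u : Fin p → EuclideanSpace ℝ ι :=
    fun j => (WithLp.equiv 2 (ι → ℝ)).symm (fun i => (Real.sqrt (d j))⁻¹ * C j i) with hu
  have hu_apply : ∀ j i, u j i = (Real.sqrt (d j))⁻¹ * C j i := by
    intro j i
    rfl
  set w : ι → EuclideanSpace ℝ ι :=
    fun i => if h : ∃ j, d j ≠ 0 ∧ inj j = i then u h.choose else 0 with hwdef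
  have hw : ∀ j, d j ≠ 0 → w (inj j) = u j := by
    intro j hj
    have hex : ∃ j', d j' ≠ 0 ∧ inj j' = inj j := ⟨j, hj, rfl⟩
    simp only [hwdef]
    rw [dif_pos hex]
    exact congrArg u (hinj hex.choose_spec.2)
  set sset : Set ι := inj '' {j | d j ≠ 0} with hsset
  have hinner : ∀ j1 j2 : Fin p, (inner ℝ (u j1) (u j2) : ℝ)
      = (Real.sqrt (d j1))⁻¹ * (Real.sqrt (d j2))⁻¹ * (if j1 = j2 then d j1 else 0) := by
    intro j1 j2
    rw [PiLp.inner_apply, ← hC j1 j2]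
    simp only [RCLike.inner_apply, conj_trivial, hu_apply]
    simp only [dotProduct, Finset.mul_sum]
    exact Finset.sum_congr rfl fun i _ => by ring
  have horth : Orthonormal ℝ (sset.restrict w) := by
    rw [orthonormal_iff_ite]
    rintro ⟨i1, hi1⟩ ⟨i2, hi2⟩
    obtain ⟨j1, hj1, rfl⟩ := hi1
    obtain ⟨j2, hj2, rfl⟩ := hi2
    show (inner ℝ (w (inj j1)) (w (inj j2)) : ℝ) = _
    rw [hw j1 hj1, hw j2 hj2, hinner]
    have hsub : ((⟨inj j1, ⟨j1, hj1, rfl⟩⟩ : sset) = ⟨inj j2, ⟨j2, hj2, rfl⟩⟩) ↔ j1 = j2 := by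
      constructor
      · intro h
        exact hinj (congrArg Subtype.val h)
      · intro h; subst h; rfl
    by_cases h12 : j1 = j2
    · subst h12
      rw [if_pos rfl, if_pos (hsub.mpr rfl)]
      have hs : Real.sqrt (d j1) ≠ 0 := by
        rw [Real.sqrt_ne_zero']
        exact lt_of_le_of_ne (hd0 j1) (Ne.symm hj1)
      have h2 : (√(d j1))⁻¹ * (√(d j1))⁻¹ * (√(d j1) * √(d j1)) = 1 := by
        field_simp
      rw [Real.mul_self_sqrt (hd0 j1)] at h2
      exact h2
    · rw [if_neg h12, if_neg (fun h => h12 (hsub.mp h))]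
      ring
  obtain ⟨b, hb⟩ :=
    horth.exists_orthonormalBasis_extension_of_card_eq finrank_euclideanSpace
  refine ⟨Matrix.of fun i k => b i k, ?_, ?_⟩
  · ext i i'
    have h := (orthonormal_iff_ite.mp b.orthonormal) i i'
    rw [PiLp.inner_apply] at h
    simp only [RCLike.inner_apply, conj_trivial] at h
    simp only [Matrix.mul_apply, Matrix.transpose_apply, Matrix.of_apply, Matrix.one_apply]
    simpa only [mul_comm] using h
  · intro j i
    by_cases hdj : d j = 0
    · have h := hC j j
      simp only [if_pos rfl, hdj] at h
      have hzero : C j i = 0 := by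
        have h' := (Finset.sum_eq_zero_iff_of_nonneg
          (fun k _ => mul_self_nonneg (C j k))).mp h i (Finset.mem_univ i)
        exact mul_self_eq_zero.mp h'
      rw [hzero, hdj, Real.sqrt_zero, zero_mul]
    · have hbj : b (inj j) = u j := by
        rw [hb (inj j) ⟨j, hdj, rfl⟩]
        exact hw j hdj
      have hs : Real.sqrt (d j) ≠ 0 := by
        rw [Real.sqrt_ne_zero']
        exact lt_of_le_of_ne (hd0 j) (Ne.symm hdj)
      simp only [Matrix.of_apply, hbj, hu_apply]
      field_simp

lemma my_key_lemma {n p : ℕ} (v : ℝ≥0) (hv : v ≠ 0)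
    (A : Matrix (Fin p) (Fin n) ℝ) (d : Fin p → ℝ)
    (hA : A * Aᵀ = Matrix.diagonal d) (c : Fin p → ℝ) :
    Measure.map (fun x => c + A.mulVec x) (Measure.pi fun _ : Fin n => gaussianReal 0 v)
      = Measure.pi fun j => gaussianReal (c j) ((d j).toNNReal * v) := by
  classical
  -- row dot products
  have hrowdot : ∀ j k, A j ⬝ᵥ A k = if j = k then d j else 0 := by
    intro j k
    have h := congrFun (congrFun hA j) k
    simpa [Matrix.mul_apply, Matrix.diagonal, dotProduct,
      Matrix.transpose_apply] using h
  have hd0 : ∀ j, 0 ≤ d j := by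
    intro j
    have h := hrowdot j j
    rw [if_pos rfl] at h
    rw [← h]
    exact Finset.sum_nonneg fun k _ => mul_self_nonneg _
  -- extend to the enlarged index type
  set C : Matrix (Fin p) (Fin p ⊕ Fin n) ℝ :=
    Matrix.of fun j => Sum.elim (fun _ => (0:ℝ)) (fun k => A j k) with hCdef
  have hCmulVec : ∀ y : (Fin p ⊕ Fin n) → ℝ,
      C.mulVec y = A.mulVec (fun k => y (Sum.inr k)) := by
    intro y
    funext j
    simp only [Matrix.mulVec, dotProduct, hCdef, Matrix.of_apply,
      Fintype.sum_sum_type, Sum.elim_inl, Sum.elim_inr, zero_mul,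
      Finset.sum_const_zero, zero_add]
  have hCdot : ∀ j k, C j ⬝ᵥ C k = if j = k then d j else 0 := by
    intro j k
    rw [← hrowdot j k]
    simp only [dotProduct, hCdef, Matrix.of_apply, Fintype.sum_sum_type,
      Sum.elim_inl, Sum.elim_inr, zero_mul, Finset.sum_const_zero, zero_add]
  obtain ⟨Q, hQ, hrow⟩ := my_complete_rows C d Sum.inl Sum.inl_injective hCdot
  -- the chain of maps
  have hmeas_proj_r : Measurable (fun y : (Fin p ⊕ Fin n) → ℝ => fun k => y (Sum.inr k)) :=
    measurable_pi_lambda _ fun k => measurable_pi_apply (Sum.inr k)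
  have hmeas_proj_l : Measurable (fun y : (Fin p ⊕ Fin n) → ℝ => fun j => y (Sum.inl j)) :=
    measurable_pi_lambda _ fun j => measurable_pi_apply (Sum.inl j)
  have hmeas_aff : Measurable (fun x : Fin n → ℝ => c + A.mulVec x) := by
    apply measurable_pi_lambda
    intro j
    simp only [Pi.add_apply]
    exact measurable_const.add ((measurable_pi_apply j).comp (my_measurable_mulVec A))
  have hmeas_F3 : Measurable (fun w : Fin p → ℝ => fun j => c j + Real.sqrt (d j) * w j) :=
    measurable_pi_lambda _ fun j =>
      (((measurable_pi_apply j).const_mul _).const_add _)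
  -- the composite identity
  have hcomp : ∀ y : (Fin p ⊕ Fin n) → ℝ,
      c + A.mulVec (fun k => y (Sum.inr k))
        = (fun j => c j + Real.sqrt (d j) * ((fun i => Q.mulVec y (Sum.inl i)) j)) := by
    intro y
    funext j
    simp only [Pi.add_apply]
    congr 1
    rw [← hCmulVec y]
    simp only [Matrix.mulVec, dotProduct, Finset.mul_sum]
    refine Finset.sum_congr rfl fun i _ => ?_
    rw [hrow j i]
    ring
  calc Measure.map (fun x => c + A.mulVec x) (Measure.pi fun _ : Fin n => gaussianReal 0 v)
      = Measure.map (fun x => c + A.mulVec x)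
          (Measure.map (fun y : (Fin p ⊕ Fin n) → ℝ => fun k => y (Sum.inr k))
            (Measure.pi fun _ : Fin p ⊕ Fin n => gaussianReal 0 v)) := by
        rw [my_map_comp_inr]
    _ = Measure.map (fun y : (Fin p ⊕ Fin n) → ℝ => c + A.mulVec (fun k => y (Sum.inr k)))
          (Measure.pi fun _ : Fin p ⊕ Fin n => gaussianReal 0 v) := by
        rw [Measure.map_map hmeas_aff hmeas_proj_r]
        rfl
    _ = Measure.map ((fun w : Fin p → ℝ => fun j => c j + Real.sqrt (d j) * w j)
          ∘ (fun y : (Fin p ⊕ Fin n) → ℝ => fun j => y (Sum.inl j)) ∘ Q.mulVec)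
          (Measure.pi fun _ : Fin p ⊕ Fin n => gaussianReal 0 v) := by
        congr 1
        funext y
        exact hcomp y
    _ = Measure.map ((fun w : Fin p → ℝ => fun j => c j + Real.sqrt (d j) * w j)
          ∘ (fun y : (Fin p ⊕ Fin n) → ℝ => fun j => y (Sum.inl j)))
          (Measure.map Q.mulVec (Measure.pi fun _ : Fin p ⊕ Fin n => gaussianReal 0 v)) := by
        rw [Measure.map_map (hmeas_F3.comp hmeas_proj_l) (my_measurable_mulVec Q)]
        rfl
    _ = Measure.map ((fun w : Fin p → ℝ => fun j => c j + Real.sqrt (d j) * w j)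
          ∘ (fun y : (Fin p ⊕ Fin n) → ℝ => fun j => y (Sum.inl j)))
          (Measure.pi fun _ : Fin p ⊕ Fin n => gaussianReal 0 v) := by
        rw [my_rotation_invariant v hv Q hQ]
    _ = Measure.map (fun w : Fin p → ℝ => fun j => c j + Real.sqrt (d j) * w j)
          (Measure.map (fun y : (Fin p ⊕ Fin n) → ℝ => fun j => y (Sum.inl j))
            (Measure.pi fun _ : Fin p ⊕ Fin n => gaussianReal 0 v)) := by
        rw [Measure.map_map hmeas_F3 hmeas_proj_l]
    _ = Measure.map (fun w : Fin p → ℝ => fun j => c j + Real.sqrt (d j) * w j)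
          (Measure.pi fun _ : Fin p => gaussianReal 0 v) := by
        rw [my_map_comp_inl]
    _ = Measure.pi fun j => Measure.map (fun r => c j + Real.sqrt (d j) * r)
          (gaussianReal 0 v) := by
        exact my_map_pi_comp _ _ fun j => ((measurable_id.const_mul _).const_add _)
    _ = Measure.pi fun j => gaussianReal (c j) ((d j).toNNReal * v) := by
        congr 1
        funext j
        rw [my_map_affine_gaussian v (Real.sqrt (d j)) (c j)]
        congr 1
        ext
        simp [Real.sq_sqrt (hd0 j), Real.coe_toNNReal _ (hd0 j)]
        rfl

/-- **Distribution of the difference statistic**: let `X, X̃ ∈ ℝ^{n×p}` satisfy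
`X̃ᵀX̃ = XᵀX = Σ` and `XᵀX̃ = Σ − diag{s}`, and let `y = Xβ + z` with `β` fixed and
`z ~ N(0, σ²Iₙ)`.  Then `W = Xᵀy − X̃ᵀy` is distributed as `N(diag{s}β, 2σ² diag{s})`;
in particular its `p` coordinates are independent Gaussians with
`W_j ~ N(s_j β_j, 2σ² s_j)`.  (The law `N(diag{s}β, 2σ² diag{s})` is expressed as the
product of these Gaussian marginals.) -/
theorem knockoff_difference_statistic_gaussian {n p : ℕ}
    {Ω : Type*} [MeasurableSpace Ω] (μ : Measure Ω) [IsProbabilityMeasure μ]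
    (X Xt : Matrix (Fin n) (Fin p) ℝ) (s : Fin p → ℝ)
    (h1 : Xtᵀ * Xt = Xᵀ * X)
    (h2 : Xᵀ * Xt = Xᵀ * X - Matrix.diagonal s)
    (β : Fin p → ℝ) (σ : ℝ) (hσ : 0 < σ)
    (z : Ω → Fin n → ℝ) (hz : Measurable z)
    (hzlaw : Measure.map z μ = Measure.pi fun _ : Fin n => gaussianReal 0 ⟨σ ^ 2, sq_nonneg σ⟩)
    (y : Ω → Fin n → ℝ) (hy : ∀ ω, y ω = X.mulVec β + z ω)
    (W : Ω → Fin p → ℝ)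
    (hW : ∀ ω, W ω = Xᵀ.mulVec (y ω) - Xtᵀ.mulVec (y ω)) :
    Measure.map W μ
      = Measure.pi fun j : Fin p =>
          gaussianReal (s j * β j) (2 * σ ^ 2 * s j).toNNReal := by
  have hv : (⟨σ ^ 2, sq_nonneg σ⟩ : ℝ≥0) ≠ 0 := by
    intro h
    have : σ ^ 2 = 0 := congrArg NNReal.toReal h
    exact absurd (pow_eq_zero_iff (n := 2) (by norm_num) |>.mp this) hσ.ne'
  set A : Matrix (Fin p) (Fin n) ℝ := Xᵀ - Xtᵀ with hAdef
  -- transposed hypothesis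
  have hX2 : Xtᵀ * X = Xᵀ * X - Matrix.diagonal s := by
    have h := congrArg Matrix.transpose h2
    rwa [Matrix.transpose_mul, Matrix.transpose_transpose, Matrix.transpose_sub,
      Matrix.transpose_mul, Matrix.transpose_transpose, Matrix.diagonal_transpose] at h
  have hAX : A * X = Matrix.diagonal s := by
    rw [hAdef, Matrix.sub_mul, hX2]
    abel
  have hAA : A * Aᵀ = Matrix.diagonal (fun j => 2 * s j) := by
    have hAT : Aᵀ = X - Xt := by
      rw [hAdef, Matrix.transpose_sub, Matrix.transpose_transpose,
        Matrix.transpose_transpose]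
    have hdiag2 : Matrix.diagonal (fun j => 2 * s j)
        = Matrix.diagonal s + Matrix.diagonal s := by
      rw [Matrix.diagonal_add]
      exact congrArg Matrix.diagonal (funext fun j => two_mul (s j))
    rw [hAdef, hAT, Matrix.sub_mul, Matrix.mul_sub, Matrix.mul_sub, h1, h2, hX2, hdiag2]
    abel
  -- nonnegativity of s
  have hs0 : ∀ j, 0 ≤ s j := by
    intro j
    have h := congrFun (congrFun hAA j) j
    simp only [Matrix.mul_apply, Matrix.transpose_apply, Matrix.diagonal_apply_eq] at h
    have : 0 ≤ 2 * s j := by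
      rw [← h]
      exact Finset.sum_nonneg fun k _ => mul_self_nonneg _
    linarith
  -- rewrite W as an affine function of z
  set m : Fin p → ℝ := fun j => s j * β j with hm
  have hWz : W = (fun x : Fin n → ℝ => m + A.mulVec x) ∘ z := by
    funext ω
    rw [Function.comp_apply, hW ω, hy ω, ← Matrix.sub_mulVec, ← hAdef,
      Matrix.mulVec_add]
    congr 1
    rw [Matrix.mulVec_mulVec, hAX]
    funext j
    rw [Matrix.mulVec_diagonal]
  have hmeas_aff : Measurable (fun x : Fin n → ℝ => m + A.mulVec x) := by
    apply measurable_pi_lambda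
    intro j
    simp only [Pi.add_apply]
    exact measurable_const.add ((measurable_pi_apply j).comp (my_measurable_mulVec A))
  rw [hWz, ← Measure.map_map hmeas_aff hz, hzlaw,
    my_key_lemma _ hv A (fun j => 2 * s j) hAA m]
  congr 1
  funext j
  congr 1
  ext
  change ((2 * s j).toNNReal : ℝ) * (σ ^ 2) = _
  rw [Real.coe_toNNReal _ (by linarith [hs0 j] : (0:ℝ) ≤ 2 * s j),
    Real.coe_toNNReal _ (by nlinarith [hs0 j, sq_nonneg σ] : (0:ℝ) ≤ 2 * σ ^ 2 * s j)]
  · show (2 * s j) * σ ^ 2 = 2 * σ ^ 2 * s j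
    ring
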